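/- Let Φ be any Young function and let φ₁, φ₂ be positive measurable functions on ℝⁿ × (0,∞) satisfying: there is C > 0 such that for all x ∈ ℝⁿ and r > 0, sup_{r<t<∞} Φ⁻¹(t⁻ⁿ) · ess sup_{t<s<∞} φ₁(x,s)/Φ⁻¹(s⁻ⁿ) ≤ C·φ₂(x,r). Then the Hardy–Littlewood maximal operator M is bounded from M_{Φ,φ₁}(ℝⁿ) to WM_{Φ,φ₂}(ℝⁿ): there is C' > 0 with ‖Mf‖_{WM_{Φ,φ₂}} ≤ C'·‖f‖_{M_{Φ,φ₁}} for all locally integrable f. -/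

import Mathlib

open MeasureTheory Metric Set NNReal ENNReal Filter

noncomputable section

/-- A Young function: a convex, left-continuous `Φ : [0,∞) → [0,∞]` with `Φ(0) = 0`
and `Φ(r) → ∞` as `r → ∞`. -/
structure YoungFunction where
  toFun : ℝ≥0 → ℝ≥0∞
  map_zero' : toFun 0 = 0
  convex' : ∀ (s t a b : ℝ≥0), a + b = 1 →
    toFun (a * s + b * t) ≤ (a : ℝ≥0∞) * toFun s + (b : ℝ≥0∞) * toFun t
  left_continuous' : ∀ s : ℝ≥0, 0 < s → toFun s = ⨆ (t : ℝ≥0) (_ : t < s), toFun t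
  tendsto_top' : Tendsto toFun atTop (nhds (⊤ : ℝ≥0∞))

namespace YoungFunction

/-- The generalized inverse `Φ⁻¹(s) = inf {r ≥ 0 : Φ(r) > s}` (with `inf ∅ = ∞`). -/
def inv (Φ : YoungFunction) (s : ℝ≥0∞) : ℝ≥0∞ :=
  sInf ((fun r : ℝ≥0 => (r : ℝ≥0∞)) '' {r : ℝ≥0 | s < Φ.toFun r})

/-- The canonical extension of `Φ` to `[0,∞]`. -/
def ext (Φ : YoungFunction) (s : ℝ≥0∞) : ℝ≥0∞ :=
  if s = ⊤ then ⊤ else Φ.toFun s.toNNReal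

/-- `Φ` is of lower type `p`: `Φ(st) ≤ C t^p Φ(s)` for all `t ∈ [0,1]`, `s ≥ 0`. -/
def IsLowerType (Φ : YoungFunction) (p : ℝ) : Prop :=
  ∃ C : ℝ, 0 < C ∧ ∀ (s t : ℝ≥0), t ≤ 1 →
    Φ.toFun (s * t) ≤ ENNReal.ofReal C * (t : ℝ≥0∞) ^ p * Φ.toFun s

/-- `Φ` is of upper type `p`: `Φ(st) ≤ C t^p Φ(s)` for all `t ≥ 1`, `s ≥ 0`. -/
def IsUpperType (Φ : YoungFunction) (p : ℝ) : Prop :=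
  ∃ C : ℝ, 0 < C ∧ ∀ (s t : ℝ≥0), 1 ≤ t →
    Φ.toFun (s * t) ≤ ENNReal.ofReal C * (t : ℝ≥0∞) ^ p * Φ.toFun s

end YoungFunction

variable {X : Type*} [MeasurableSpace X]

/-- The Luxemburg norm `‖g‖_{L_Φ(E)}` of an `[0,∞]`-valued function `g` on a set `E`. -/
def luxNormE (Φ : YoungFunction) (μ : Measure X) (E : Set X) (g : X → ℝ≥0∞) : ℝ≥0∞ :=
  sInf {lam : ℝ≥0∞ | 0 < lam ∧ ∫⁻ x in E, Φ.ext (g x / lam) ∂μ ≤ 1}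

/-- The Luxemburg norm `‖f‖_{L_Φ(E)}` of a real-valued function `f` on a set `E`. -/
def luxNorm (Φ : YoungFunction) (μ : Measure X) (E : Set X) (f : X → ℝ) : ℝ≥0∞ :=
  luxNormE Φ μ E fun x => (‖f x‖₊ : ℝ≥0∞)

/-- The weak Luxemburg norm `‖g‖_{WL_Φ(E)}`. -/
def wLuxNormE (Φ : YoungFunction) (μ : Measure X) (E : Set X) (g : X → ℝ≥0∞) : ℝ≥0∞ :=
  sInf {lam : ℝ≥0∞ | 0 < lam ∧
    ∀ t : ℝ≥0, 0 < t → Φ.toFun t * μ {x | x ∈ E ∧ (t : ℝ≥0∞) < g x / lam} ≤ 1}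

/-- The weak Luxemburg norm of a real-valued function. -/
def wLuxNorm (Φ : YoungFunction) (μ : Measure X) (E : Set X) (f : X → ℝ) : ℝ≥0∞ :=
  wLuxNormE Φ μ E fun x => (‖f x‖₊ : ℝ≥0∞)

/-- Euclidean space `ℝⁿ` with Lebesgue measure. -/
abbrev En (n : ℕ) := EuclideanSpace ℝ (Fin n)

/-- The fractional maximal operator
`M_α f(x) = sup_{t>0} |B(x,t)|^{α/n - 1} ∫_{B(x,t)} |f(y)| dy`. -/
def fracMaximal (n : ℕ) (α : ℝ) (f : En n → ℝ) (x : En n) : ℝ≥0∞ :=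
  ⨆ (t : ℝ) (_ : 0 < t),
    volume (ball x t) ^ (α / (n : ℝ) - 1) * ∫⁻ y in ball x t, (‖f y‖₊ : ℝ≥0∞)

/-- The commutator of the fractional maximal operator
`M_{b,α} f(x) = sup_{t>0} |B(x,t)|^{α/n - 1} ∫_{B(x,t)} |b(x)-b(y)||f(y)| dy`. -/
def commFracMaximal (n : ℕ) (α : ℝ) (b f : En n → ℝ) (x : En n) : ℝ≥0∞ :=
  ⨆ (t : ℝ) (_ : 0 < t),
    volume (ball x t) ^ (α / (n : ℝ) - 1) *
      ∫⁻ y in ball x t, (‖b x - b y‖₊ : ℝ≥0∞) * (‖f y‖₊ : ℝ≥0∞)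

/-- The Hardy–Littlewood maximal operator. -/
def hlMaximal (n : ℕ) (f : En n → ℝ) (x : En n) : ℝ≥0∞ :=
  ⨆ (t : ℝ) (_ : 0 < t),
    (volume (ball x t))⁻¹ * ∫⁻ y in ball x t, (‖f y‖₊ : ℝ≥0∞)

/-- The commutator of the Hardy–Littlewood maximal operator. -/
def commMaximal (n : ℕ) (b f : En n → ℝ) (x : En n) : ℝ≥0∞ :=
  ⨆ (t : ℝ) (_ : 0 < t),
    (volume (ball x t))⁻¹ * ∫⁻ y in ball x t, (‖b x - b y‖₊ : ℝ≥0∞) * (‖f y‖₊ : ℝ≥0∞)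

/-- The generalized Orlicz–Morrey norm `‖g‖_{M_{Φ,φ}}` (for `[0,∞]`-valued functions). -/
def morreyNormE (n : ℕ) (Φ : YoungFunction) (φ : En n → ℝ → ℝ) (g : En n → ℝ≥0∞) : ℝ≥0∞ :=
  ⨆ (x : En n) (r : ℝ) (_ : 0 < r),
    (ENNReal.ofReal (φ x r))⁻¹ * Φ.inv (ENNReal.ofReal r ^ (-(n : ℝ))) *
      luxNormE Φ volume (ball x r) g

/-- The generalized Orlicz–Morrey norm of a real-valued function. -/
def morreyNorm (n : ℕ) (Φ : YoungFunction) (φ : En n → ℝ → ℝ) (f : En n → ℝ) : ℝ≥0∞ :=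
  morreyNormE n Φ φ fun x => (‖f x‖₊ : ℝ≥0∞)

/-- The weak generalized Orlicz–Morrey norm `‖g‖_{WM_{Φ,φ}}`. -/
def wMorreyNormE (n : ℕ) (Φ : YoungFunction) (φ : En n → ℝ → ℝ) (g : En n → ℝ≥0∞) : ℝ≥0∞ :=
  ⨆ (x : En n) (r : ℝ) (_ : 0 < r),
    (ENNReal.ofReal (φ x r))⁻¹ * Φ.inv (ENNReal.ofReal r ^ (-(n : ℝ))) *
      wLuxNormE Φ volume (ball x r) g

/-- The Orlicz–Morrey norm `‖g‖_{M_{Φ,λ}}` with exponent `λ`. -/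
def morreyLamNormE (n : ℕ) (Φ : YoungFunction) (lam : ℝ) (g : En n → ℝ≥0∞) : ℝ≥0∞ :=
  ⨆ (x : En n) (r : ℝ) (_ : 0 < r),
    Φ.inv (ENNReal.ofReal r ^ (-lam)) * luxNormE Φ volume (ball x r) g

/-- The Orlicz–Morrey norm with exponent `λ` of a real-valued function. -/
def morreyLamNorm (n : ℕ) (Φ : YoungFunction) (lam : ℝ) (f : En n → ℝ) : ℝ≥0∞ :=
  morreyLamNormE n Φ lam fun x => (‖f x‖₊ : ℝ≥0∞)

/-- The average `f_{B(x,r)}` of `f` over the ball `B(x,r)`. -/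
def ballAvg (n : ℕ) (b : En n → ℝ) (x : En n) (r : ℝ) : ℝ :=
  ⨍ y in ball x r, b y

/-- The BMO seminorm `‖b‖_*`. -/
def bmoSeminorm (n : ℕ) (b : En n → ℝ) : ℝ≥0∞ :=
  ⨆ (x : En n) (r : ℝ) (_ : 0 < r),
    ENNReal.ofReal (⨍ y in ball x r, |b y - ballAvg n b x r|)
section AuxHelpers

open scoped ENNReal

lemma le_mul_sInf' {c x : ℝ≥0∞} {S : Set ℝ≥0∞} (hc : c ≠ ⊤) (hS : S.Nonempty)
    (h : ∀ b ∈ S, x ≤ c * b) : x ≤ c * sInf S := by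
  rcases eq_or_ne c 0 with rfl | hc0
  · obtain ⟨b, hb⟩ := hS
    simpa using h b hb
  · have h1 : x / c ≤ sInf S :=
      le_sInf fun b hb => (ENNReal.div_le_iff hc0 hc).mpr ((h b hb).trans_eq (mul_comm _ _))
    exact ((ENNReal.div_le_iff hc0 hc).mp h1).trans_eq (mul_comm _ _)

lemma le_add_mul_of_forall_lt' {c κ a x : ℝ≥0∞} (hκ : κ ≠ ⊤) (ha : a ≠ ⊤)
    (h : ∀ b, a < b → b ≠ ⊤ → x ≤ c + κ * b) : x ≤ c + κ * a := by
  rcases eq_or_ne κ 0 with rfl | hκ0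
  · have := h (a + 1) (ENNReal.lt_add_right ha one_ne_zero)
      (by simp [ENNReal.add_ne_top, ha])
    simpa using this
  · refine ENNReal.le_of_forall_pos_le_add fun ε hε _ => ?_
    have hεκ : (ε : ℝ≥0∞) / κ ≠ 0 := by
      simp [ENNReal.div_eq_zero_iff, hκ, hε.ne']
    have hb' : a + (ε : ℝ≥0∞) / κ ≠ ⊤ :=
      ENNReal.add_ne_top.mpr ⟨ha, (ENNReal.div_lt_top ENNReal.coe_ne_top hκ0).ne⟩
    have hcc : κ * ((ε : ℝ≥0∞) / κ) = ε := ENNReal.mul_div_cancel hκ0 hκ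
    calc x ≤ c + κ * (a + (ε : ℝ≥0∞) / κ) := h _ (ENNReal.lt_add_right ha hεκ) hb'
    _ = c + κ * a + ε := by rw [mul_add, hcc, add_assoc]

lemma le_mul_of_forall_lt' {κ a x : ℝ≥0∞} (hκ : κ ≠ ⊤) (ha : a ≠ ⊤)
    (h : ∀ b, a < b → b ≠ ⊤ → x ≤ κ * b) : x ≤ κ * a := by
  have := le_add_mul_of_forall_lt' (c := 0) hκ ha (fun b hb hb' => by
    simpa using h b hb hb')
  simpa using this

lemma inv_mul_self_le_one' (a : ℝ≥0∞) : a⁻¹ * a ≤ 1 := by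
  rcases eq_or_ne a 0 with rfl | h0
  · simp
  rcases eq_or_ne a ⊤ with rfl | ht
  · simp
  · rw [ENNReal.inv_mul_cancel h0 ht]

lemma mul_div_le' (a b : ℝ≥0∞) : a * (b / a) ≤ b := by
  rcases eq_or_ne a 0 with rfl | h0
  · simp
  rcases eq_or_ne a ⊤ with rfl | ht
  · simp [ENNReal.div_top]
  · rw [ENNReal.mul_div_cancel h0 ht]

lemma eq_zero_of_forall_nat_mul_le' {a : ℝ≥0∞} (h : ∀ k : ℕ, (k : ℝ≥0∞) * a ≤ 1) : a = 0 := by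
  by_contra ha
  rcases eq_or_ne a ⊤ with rfl | hat
  · have := h 2
    simp [ENNReal.mul_top] at this
  · obtain ⟨k, hk⟩ := ENNReal.exists_nat_gt (show (1 / a : ℝ≥0∞) ≠ ⊤ by
      simp [ENNReal.div_eq_top, hat, ha])
    have h1 : (1 : ℝ≥0∞) / a * a < (k : ℝ≥0∞) * a :=
      (ENNReal.mul_lt_mul_iff_left ha hat).mpr hk
    rw [ENNReal.div_mul_cancel ha hat] at h1
    exact absurd (h k) (not_le.mpr h1)

end AuxHelpers

namespace YoungFunction

variable (Φ : YoungFunction)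

lemma le_div_mul {s t : ℝ≥0} (hst : s ≤ t) (ht : t ≠ 0) :
    Φ.toFun s ≤ ((s / t : ℝ≥0) : ℝ≥0∞) * Φ.toFun t := by
  have hd : s / t ≤ 1 := div_le_one_of_le₀ hst zero_le
  have hab : s / t + (1 - s / t) = 1 := add_tsub_cancel_of_le hd
  have h := Φ.convex' t 0 (s / t) (1 - s / t) hab
  rw [mul_zero, add_zero, div_mul_cancel₀ _ ht, Φ.map_zero', mul_zero, add_zero] at h
  exact h

lemma mono : Monotone Φ.toFun := by
  intro s t hst
  rcases eq_or_ne t 0 with rfl | ht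
  · obtain rfl := le_antisymm hst zero_le
    exact le_rfl
  · refine (Φ.le_div_mul hst ht).trans ?_
    have hd : ((s / t : ℝ≥0) : ℝ≥0∞) ≤ 1 := by
      exact_mod_cast div_le_one_of_le₀ hst zero_le
    exact (mul_le_mul_left hd _).trans_eq (one_mul _)

lemma toFun_mul_le {s t : ℝ≥0} (hst : s ≤ t) :
    Φ.toFun s * (t : ℝ≥0∞) ≤ Φ.toFun t * (s : ℝ≥0∞) := by
  rcases eq_or_ne t 0 with rfl | ht
  · obtain rfl := le_antisymm hst zero_le
    exact le_rfl
  calc Φ.toFun s * (t : ℝ≥0∞) ≤ ((s / t : ℝ≥0) : ℝ≥0∞) * Φ.toFun t * (t : ℝ≥0∞) :=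
        mul_le_mul_left (Φ.le_div_mul hst ht) _
  _ = Φ.toFun t * (((s / t : ℝ≥0) : ℝ≥0∞) * (t : ℝ≥0∞)) := by ring
  _ = Φ.toFun t * (s : ℝ≥0∞) := by rw [← ENNReal.coe_mul, div_mul_cancel₀ _ ht]

lemma nat_mul_le (k : ℕ) (t : ℝ≥0) :
    (k : ℝ≥0∞) * Φ.toFun t ≤ Φ.toFun ((k : ℝ≥0) * t) := by
  rcases eq_or_ne t 0 with rfl | ht
  · simp [Φ.map_zero']
  rcases Nat.eq_zero_or_pos k with rfl | hk
  · simp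
  have hst : t ≤ (k : ℝ≥0) * t :=
    le_mul_of_one_le_left zero_le (by exact_mod_cast hk)
  have h := Φ.toFun_mul_le hst
  have h2 : (k : ℝ≥0∞) * Φ.toFun t * (t : ℝ≥0∞) ≤ Φ.toFun ((k : ℝ≥0) * t) * (t : ℝ≥0∞) := by
    calc (k : ℝ≥0∞) * Φ.toFun t * (t : ℝ≥0∞)
        = Φ.toFun t * (((k : ℝ≥0) * t : ℝ≥0) : ℝ≥0∞) := by push_cast; ring
    _ ≤ _ := h
  exact (ENNReal.mul_le_mul_iff_left (by exact_mod_cast ht) ENNReal.coe_ne_top).mp h2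

lemma ext_coe (s : ℝ≥0) : Φ.ext (s : ℝ≥0∞) = Φ.toFun s := by
  simp [YoungFunction.ext]

lemma ext_top : Φ.ext ⊤ = ⊤ := if_pos rfl

lemma ext_zero : Φ.ext 0 = 0 := by
  simp [YoungFunction.ext, Φ.map_zero']

lemma ext_mono : Monotone Φ.ext := by
  intro a b hab
  rcases eq_or_ne b ⊤ with rfl | hb
  · rw [Φ.ext_top]; exact le_top
  have ha : a ≠ ⊤ := fun h => hb (top_le_iff.mp (h ▸ hab))
  rw [YoungFunction.ext, YoungFunction.ext, if_neg ha, if_neg hb]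
  exact Φ.mono ((ENNReal.toNNReal_le_toNNReal ha hb).mpr hab)

lemma toFun_mul_le_ext {s : ℝ≥0} {u : ℝ≥0∞} (hsu : (s : ℝ≥0∞) ≤ u) :
    Φ.toFun s * u ≤ (s : ℝ≥0∞) * Φ.ext u := by
  rcases eq_or_ne u ⊤ with rfl | hu
  · rcases eq_or_ne s 0 with rfl | hs
    · simp [Φ.map_zero']
    · rw [Φ.ext_top, ENNReal.mul_top (ENNReal.coe_ne_zero.mpr hs)]
      exact le_top
  · lift u to ℝ≥0 using hu
    rw [Φ.ext_coe]
    calc Φ.toFun s * (u : ℝ≥0∞) ≤ Φ.toFun u * (s : ℝ≥0∞) :=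
          Φ.toFun_mul_le (by exact_mod_cast hsu)
    _ = (s : ℝ≥0∞) * Φ.toFun u := mul_comm _ _

lemma inv_le_of_lt {u : ℝ≥0∞} {t : ℝ≥0} (h : u < Φ.toFun t) : Φ.inv u ≤ (t : ℝ≥0∞) :=
  sInf_le ⟨t, h, rfl⟩

lemma toFun_le_of_lt_inv {u : ℝ≥0∞} {t : ℝ≥0} (h : (t : ℝ≥0∞) < Φ.inv u) : Φ.toFun t ≤ u := by
  by_contra hc
  exact absurd (Φ.inv_le_of_lt (not_le.mp hc)) (not_le.mpr h)

lemma inv_mono : Monotone Φ.inv := fun u v huv =>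
  sInf_le_sInf (Set.image_mono fun r hr => lt_of_le_of_lt huv hr)

lemma exists_toFun_gt {u : ℝ≥0∞} (hu : u ≠ ⊤) : ∃ t : ℝ≥0, u < Φ.toFun t := by
  have h1 : ∀ᶠ t : ℝ≥0 in Filter.atTop, u < Φ.toFun t :=
    Φ.tendsto_top'.eventually (Filter.eventually_of_mem (Ioi_mem_nhds hu.lt_top) fun y hy => hy)
  exact h1.exists

lemma inv_lt_top {u : ℝ≥0∞} (hu : u ≠ ⊤) : Φ.inv u < ⊤ := by
  obtain ⟨t, ht⟩ := Φ.exists_toFun_gt hu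
  exact lt_of_le_of_lt (Φ.inv_le_of_lt ht) ENNReal.coe_lt_top

lemma inv_top : Φ.inv ⊤ = ⊤ := by
  have h : {r : ℝ≥0 | (⊤ : ℝ≥0∞) < Φ.toFun r} = ∅ := by
    ext r
    simp
  rw [YoungFunction.inv, h, Set.image_empty]
  exact sInf_empty

lemma inv_nat_mul_le (k : ℕ) (hk : 0 < k) (u : ℝ≥0∞) :
    Φ.inv ((k : ℝ≥0∞) * u) ≤ (k : ℝ≥0∞) * Φ.inv u := by
  have hk0 : (k : ℝ≥0∞) ≠ 0 := by exact_mod_cast hk.ne'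
  rcases eq_or_ne u ⊤ with rfl | hu
  · rw [Φ.inv_top, ENNReal.mul_top hk0]
    exact le_top
  have hTne : {r : ℝ≥0 | u < Φ.toFun r}.Nonempty := Φ.exists_toFun_gt hu
  refine le_mul_sInf' (ENNReal.natCast_ne_top k) ?_ ?_
  · exact hTne.image _
  · rintro b ⟨r, hr, rfl⟩
    have h1 : (k : ℝ≥0∞) * u < Φ.toFun ((k : ℝ≥0) * r) := by
      refine lt_of_lt_of_le ?_ (Φ.nat_mul_le k r)
      rcases eq_or_ne (Φ.toFun r) ⊤ with htop | htop
      · rw [htop, ENNReal.mul_top hk0]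
        exact (mul_ne_top (ENNReal.natCast_ne_top k) hu).lt_top
      · exact (ENNReal.mul_lt_mul_iff_right hk0 (ENNReal.natCast_ne_top k)).mpr hr
    have h2 := Φ.inv_le_of_lt h1
    calc Φ.inv ((k : ℝ≥0∞) * u) ≤ (((k : ℝ≥0) * r : ℝ≥0) : ℝ≥0∞) := h2
    _ = (k : ℝ≥0∞) * (r : ℝ≥0∞) := by push_cast; ring

end YoungFunction
section LuxLemmas

variable {X : Type*} [MeasurableSpace X] (Φ : YoungFunction) {μ : MeasureTheory.Measure X}
  {E F : Set X} {g g' : X → ℝ≥0∞}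

open MeasureTheory

lemma luxNormE_le {b : ℝ≥0∞} (hb : 0 < b) (h : ∫⁻ x in E, Φ.ext (g x / b) ∂μ ≤ 1) :
    luxNormE Φ μ E g ≤ b := sInf_le ⟨hb, h⟩

lemma lux_adm_of_lt {b : ℝ≥0∞} (h : luxNormE Φ μ E g < b) :
    0 < b ∧ ∫⁻ x in E, Φ.ext (g x / b) ∂μ ≤ 1 := by
  obtain ⟨a, ⟨ha0, ha⟩, hab⟩ := sInf_lt_iff.mp h
  refine ⟨ha0.trans hab, le_trans (lintegral_mono fun x => Φ.ext_mono ?_) ha⟩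
  exact ENNReal.div_le_div_left hab.le _

lemma luxNormE_mono_set (hEF : E ⊆ F) : luxNormE Φ μ E g ≤ luxNormE Φ μ F g :=
  sInf_le_sInf fun b hb => ⟨hb.1, le_trans (lintegral_mono_set hEF) hb.2⟩

lemma lintegral_le_lux (hE : μ E ≠ ⊤) (hL : luxNormE Φ μ E g ≠ ⊤) :
    ∫⁻ x in E, g x ∂μ ≤ 2 * μ E * Φ.inv ((μ E)⁻¹) * luxNormE Φ μ E g := by
  rcases eq_or_ne (μ E) 0 with h0 | h0
  · have hres : μ.restrict E = 0 := Measure.restrict_eq_zero.mpr h0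
    simp [hres]
  have hinv_ne : (μ E)⁻¹ ≠ ⊤ := ENNReal.inv_ne_top.mpr h0
  -- the set of admissible thresholds
  have hTne : {r : ℝ≥0 | (μ E)⁻¹ < Φ.toFun r}.Nonempty := Φ.exists_toFun_gt hinv_ne
  have key : ∀ b, luxNormE Φ μ E g < b → b ≠ ⊤ → ∀ t₀ : ℝ≥0, (μ E)⁻¹ < Φ.toFun t₀ →
      ∫⁻ x in E, g x ∂μ ≤ 2 * μ E * (t₀ : ℝ≥0∞) * b := by
    intro b hb hbt t₀ ht₀
    obtain ⟨hb0, hint⟩ := lux_adm_of_lt Φ hb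
    have ht₀0 : t₀ ≠ 0 := by
      rintro rfl
      rw [Φ.map_zero'] at ht₀
      exact absurd ht₀ (by simp)
    have hΦ0 : Φ.toFun t₀ ≠ 0 := by
      intro hh
      rw [hh] at ht₀
      exact absurd ht₀ (by simp)
    have hμinv : (Φ.toFun t₀)⁻¹ ≤ μ E := by
      rw [← inv_inv (μ E)]
      exact ENNReal.inv_le_inv.mpr ht₀.le
    rcases eq_or_ne (Φ.toFun t₀) ⊤ with hΦtop | hΦtop
    · -- Φ t₀ = ⊤ : the part above level b*t₀ integrates to zero
      set h2 : X → ℝ≥0∞ := fun x => if b * (t₀ : ℝ≥0∞) < g x then g x else 0 with hh2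
      have hg_le : ∀ x, g x ≤ b * (t₀ : ℝ≥0∞) + h2 x := by
        intro x
        by_cases hx : b * (t₀ : ℝ≥0∞) < g x
        · simp only [hh2, if_pos hx]
          exact le_add_self
        · simp only [hh2, if_neg hx]
          rw [add_zero]
          exact not_lt.mp hx
      have hzero : ∫⁻ x in E, h2 x ∂μ = 0 := by
        refine eq_zero_of_forall_nat_mul_le' fun k => ?_
        have hpt : ∀ x, (k : ℝ≥0∞) * h2 x ≤ Φ.ext (g x / b) := by
          intro x
          by_cases hx : b * (t₀ : ℝ≥0∞) < g x
          · have h1 : (t₀ : ℝ≥0∞) < g x / b :=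
              (ENNReal.lt_div_iff_mul_lt (Or.inl hb0.ne') (Or.inl hbt)).mpr
                (by rw [mul_comm]; exact hx)
            have h2' : Φ.ext (g x / b) = ⊤ := by
              refine top_le_iff.mp ?_
              calc (⊤ : ℝ≥0∞) = Φ.toFun t₀ := hΦtop.symm
              _ = Φ.ext (t₀ : ℝ≥0∞) := (Φ.ext_coe t₀).symm
              _ ≤ Φ.ext (g x / b) := Φ.ext_mono h1.le
            rw [h2']
            exact le_top
          · simp [hh2, if_neg hx]
        calc (k : ℝ≥0∞) * ∫⁻ x in E, h2 x ∂μ ≤ ∫⁻ x in E, (k : ℝ≥0∞) * h2 x ∂μ :=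
              lintegral_const_mul_le _ _
        _ ≤ ∫⁻ x in E, Φ.ext (g x / b) ∂μ := lintegral_mono hpt
        _ ≤ 1 := hint
      calc ∫⁻ x in E, g x ∂μ ≤ ∫⁻ x in E, (b * (t₀ : ℝ≥0∞) + h2 x) ∂μ := lintegral_mono hg_le
      _ = b * (t₀ : ℝ≥0∞) * μ E + ∫⁻ x in E, h2 x ∂μ := by
            rw [lintegral_add_left measurable_const, setLIntegral_const]
      _ = b * (t₀ : ℝ≥0∞) * μ E := by rw [hzero, add_zero]
      _ ≤ 2 * μ E * (t₀ : ℝ≥0∞) * b := by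
            rw [show 2 * μ E * (t₀ : ℝ≥0∞) * b = 2 * (b * (t₀ : ℝ≥0∞) * μ E) by ring]
            exact le_mul_of_one_le_left zero_le (by norm_num)
    · -- Φ t₀ finite
      have hpt : ∀ x, g x ≤ b * (t₀ : ℝ≥0∞) + b * (t₀ : ℝ≥0∞) / Φ.toFun t₀ * Φ.ext (g x / b) := by
        intro x
        by_cases hx : g x / b ≤ (t₀ : ℝ≥0∞)
        · have : g x ≤ b * (t₀ : ℝ≥0∞) := by
            rw [mul_comm]
            exact (ENNReal.div_le_iff hb0.ne' hbt).mp hx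
          exact this.trans le_self_add
        · push_neg at hx
          refine le_trans ?_ le_add_self
          -- g x ≤ b * t₀ / Φ t₀ * Φ.ext (g x / b)
          have hratio : Φ.toFun t₀ * (g x / b) ≤ (t₀ : ℝ≥0∞) * Φ.ext (g x / b) :=
            Φ.toFun_mul_le_ext hx.le
          have hgx : g x = g x / b * b := (ENNReal.div_mul_cancel hb0.ne' hbt).symm
          have hstep : g x / b ≤ (t₀ : ℝ≥0∞) * Φ.ext (g x / b) / Φ.toFun t₀ := by
            rw [ENNReal.le_div_iff_mul_le (Or.inl hΦ0) (Or.inl hΦtop), mul_comm]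
            exact hratio
          calc g x = g x / b * b := hgx
          _ ≤ (t₀ : ℝ≥0∞) * Φ.ext (g x / b) / Φ.toFun t₀ * b := mul_le_mul_left hstep b
          _ = b * (t₀ : ℝ≥0∞) / Φ.toFun t₀ * Φ.ext (g x / b) := by
                simp only [div_eq_mul_inv]
                ring
      have hcoef_ne : b * (t₀ : ℝ≥0∞) / Φ.toFun t₀ ≠ ⊤ := by
        apply ne_of_lt
        apply ENNReal.div_lt_top (mul_ne_top hbt ENNReal.coe_ne_top) hΦ0
      calc ∫⁻ x in E, g x ∂μ
          ≤ ∫⁻ x in E, (b * (t₀ : ℝ≥0∞) + b * (t₀ : ℝ≥0∞) / Φ.toFun t₀ * Φ.ext (g x / b)) ∂μ :=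
            lintegral_mono hpt
      _ = b * (t₀ : ℝ≥0∞) * μ E + b * (t₀ : ℝ≥0∞) / Φ.toFun t₀ * ∫⁻ x in E, Φ.ext (g x / b) ∂μ := by
            rw [lintegral_add_left measurable_const, setLIntegral_const,
              lintegral_const_mul' _ _ hcoef_ne]
      _ ≤ b * (t₀ : ℝ≥0∞) * μ E + b * (t₀ : ℝ≥0∞) / Φ.toFun t₀ * 1 := by gcongr
      _ ≤ b * (t₀ : ℝ≥0∞) * μ E + b * (t₀ : ℝ≥0∞) * μ E := by
            rw [mul_one, div_eq_mul_inv]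
            exact add_le_add le_rfl (mul_le_mul_right hμinv _)
      _ = 2 * μ E * (t₀ : ℝ≥0∞) * b := by ring
  have key2 : ∀ b, luxNormE Φ μ E g < b → b ≠ ⊤ →
      ∫⁻ x in E, g x ∂μ ≤ 2 * μ E * Φ.inv ((μ E)⁻¹) * b := by
    intro b hb hbt
    have hb0 : 0 < b := (lux_adm_of_lt Φ hb).1
    have h := le_mul_sInf' (c := 2 * μ E * b) (x := ∫⁻ x in E, g x ∂μ)
      (S := (fun r : ℝ≥0 => (r : ℝ≥0∞)) '' {r : ℝ≥0 | (μ E)⁻¹ < Φ.toFun r})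
      (mul_ne_top (mul_ne_top (by norm_num) hE) hbt) (hTne.image _) ?_
    · rw [YoungFunction.inv]
      calc ∫⁻ x in E, g x ∂μ ≤ 2 * μ E * b * sInf _ := h
      _ = 2 * μ E * sInf _ * b := by ring
    · rintro v ⟨t₀, ht₀, rfl⟩
      calc ∫⁻ x in E, g x ∂μ ≤ 2 * μ E * (t₀ : ℝ≥0∞) * b := key b hb hbt t₀ ht₀
      _ = 2 * μ E * b * (t₀ : ℝ≥0∞) := by ring
  exact le_mul_of_forall_lt' (κ := 2 * μ E * Φ.inv ((μ E)⁻¹)) (a := luxNormE Φ μ E g)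
    (mul_ne_top (mul_ne_top (by norm_num) hE) (Φ.inv_lt_top hinv_ne).ne) hL key2

end LuxLemmas
section WLuxLemmas

variable {X : Type*} [MeasurableSpace X] (Φ : YoungFunction) {μ : MeasureTheory.Measure X}
  {E F : Set X} {g g' g₁ g₂ : X → ℝ≥0∞}

open MeasureTheory

lemma wLuxNormE_le {b : ℝ≥0∞} (hb : 0 < b)
    (h : ∀ t : ℝ≥0, 0 < t → Φ.toFun t * μ {x | x ∈ E ∧ (t : ℝ≥0∞) < g x / b} ≤ 1) :
    wLuxNormE Φ μ E g ≤ b := sInf_le ⟨hb, h⟩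

lemma wlux_adm_of_lt {b : ℝ≥0∞} (h : wLuxNormE Φ μ E g < b) :
    0 < b ∧ ∀ t : ℝ≥0, 0 < t → Φ.toFun t * μ {x | x ∈ E ∧ (t : ℝ≥0∞) < g x / b} ≤ 1 := by
  obtain ⟨a, ⟨ha0, ha⟩, hab⟩ := sInf_lt_iff.mp h
  refine ⟨ha0.trans hab, fun t ht => le_trans (mul_le_mul_right (measure_mono ?_) _) (ha t ht)⟩
  rintro x ⟨hxE, hx⟩
  exact ⟨hxE, lt_of_lt_of_le hx (ENNReal.div_le_div_left hab.le _)⟩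

lemma wlux_mono_set (hEF : E ⊆ F) : wLuxNormE Φ μ E g ≤ wLuxNormE Φ μ F g := by
  refine sInf_le_sInf fun b hb => ⟨hb.1, fun t ht => ?_⟩
  refine le_trans (mul_le_mul_right (measure_mono ?_) _) (hb.2 t ht)
  rintro x ⟨hxE, hx⟩
  exact ⟨hEF hxE, hx⟩

lemma wlux_mono_fun (h : ∀ x ∈ E, g x ≤ g' x) : wLuxNormE Φ μ E g ≤ wLuxNormE Φ μ E g' := by
  refine sInf_le_sInf fun b hb => ⟨hb.1, fun t ht => ?_⟩
  refine le_trans (mul_le_mul_right (measure_mono ?_) _) (hb.2 t ht)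
  rintro x ⟨hxE, hx⟩
  exact ⟨hxE, lt_of_lt_of_le hx (ENNReal.div_le_div_right (h x hxE) _)⟩

lemma wlux_le_of_bounded {A : ℝ≥0∞} (h : ∀ x ∈ E, g x ≤ A) :
    wLuxNormE Φ μ E g ≤ A / Φ.inv ((μ E)⁻¹) := by
  set J := Φ.inv ((μ E)⁻¹) with hJ
  refine le_of_forall_gt_imp_ge_of_dense fun b hb => ?_
  have hb0 : 0 < b := lt_of_le_of_lt zero_le hb
  refine wLuxNormE_le Φ hb0 fun t ht => ?_
  by_cases hS : {x | x ∈ E ∧ (t : ℝ≥0∞) < g x / b}.Nonempty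
  · obtain ⟨x₀, hx₀E, hx₀⟩ := hS
    have h1 : (t : ℝ≥0∞) < A / b := lt_of_lt_of_le hx₀ (ENNReal.div_le_div_right (h x₀ hx₀E) _)
    have h2 : A / b ≤ J := by
      rcases eq_or_ne b ⊤ with rfl | hbt
      · simp
      rcases eq_or_ne J ⊤ with hJt | hJt
      · rw [hJt]; exact le_top
      rcases eq_or_ne J 0 with hJ0 | hJ0
      · rcases eq_or_ne A 0 with rfl | hA0
        · simp
        · rw [hJ0, ENNReal.div_zero hA0] at hb
          exact absurd hb not_top_lt
      · have hA : A < b * J := (ENNReal.div_lt_iff (Or.inl hJ0) (Or.inl hJt)).mp hb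
        exact (ENNReal.div_le_iff hb0.ne' hbt).mpr (hA.le.trans_eq (mul_comm _ _))
    have h3 : Φ.toFun t ≤ (μ E)⁻¹ := Φ.toFun_le_of_lt_inv (lt_of_lt_of_le h1 h2)
    calc Φ.toFun t * μ {x | x ∈ E ∧ (t : ℝ≥0∞) < g x / b}
        ≤ (μ E)⁻¹ * μ E := mul_le_mul' h3 (measure_mono fun x hx => hx.1)
    _ ≤ 1 := inv_mul_self_le_one' _
  · rw [Set.not_nonempty_iff_eq_empty.mp hS]
    simp

lemma wlux_add_le (h : ∀ x ∈ E, g x ≤ g₁ x + g₂ x) :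
    wLuxNormE Φ μ E g ≤ 4 * (wLuxNormE Φ μ E g₁ + wLuxNormE Φ μ E g₂) := by
  set W₁ := wLuxNormE Φ μ E g₁ with hW₁
  set W₂ := wLuxNormE Φ μ E g₂ with hW₂
  rcases eq_or_ne W₁ ⊤ with h1 | h1
  · rw [h1, top_add, ENNReal.mul_top (by norm_num)]
    exact le_top
  rcases eq_or_ne W₂ ⊤ with h2 | h2
  · rw [h2, add_top, ENNReal.mul_top (by norm_num)]
    exact le_top
  have step : ∀ b₁, W₁ < b₁ → b₁ ≠ ⊤ → ∀ b₂, W₂ < b₂ → b₂ ≠ ⊤ →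
      wLuxNormE Φ μ E g ≤ 4 * b₁ + 4 * b₂ := by
    intro b₁ hb₁ hb₁t b₂ hb₂ hb₂t
    obtain ⟨hb₁0, H₁⟩ := wlux_adm_of_lt Φ hb₁
    obtain ⟨hb₂0, H₂⟩ := wlux_adm_of_lt Φ hb₂
    have hb4 : 4 * b₁ + 4 * b₂ = 4 * (b₁ + b₂) := (mul_add _ _ _).symm
    rw [hb4]
    have hb0 : (4 : ℝ≥0∞) * (b₁ + b₂) ≠ 0 := by
      simp only [ne_eq, mul_eq_zero, not_or]
      constructor
      · norm_num
      · simp [hb₁0.ne']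
    have hbt : (4 : ℝ≥0∞) * (b₁ + b₂) ≠ ⊤ :=
      mul_ne_top (by norm_num) (ENNReal.add_ne_top.mpr ⟨hb₁t, hb₂t⟩)
    refine wLuxNormE_le Φ (zero_lt_iff.mpr hb0) fun t ht => ?_
    have hsub : {x | x ∈ E ∧ (t : ℝ≥0∞) < g x / (4 * (b₁ + b₂))} ⊆
        {x | x ∈ E ∧ ((2 * t : ℝ≥0) : ℝ≥0∞) < g₁ x / b₁} ∪
        {x | x ∈ E ∧ ((2 * t : ℝ≥0) : ℝ≥0∞) < g₂ x / b₂} := by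
      rintro x ⟨hxE, hx⟩
      have hgx : (t : ℝ≥0∞) * (4 * (b₁ + b₂)) < g x :=
        (ENNReal.lt_div_iff_mul_lt (Or.inl hb0) (Or.inl hbt)).mp hx
      by_contra hcon
      simp only [Set.mem_union, Set.mem_setOf_eq, not_or, not_and, not_lt] at hcon
      have hc₁ : g₁ x / b₁ ≤ ((2 * t : ℝ≥0) : ℝ≥0∞) := hcon.1 hxE
      have hc₂ : g₂ x / b₂ ≤ ((2 * t : ℝ≥0) : ℝ≥0∞) := hcon.2 hxE
      have hg₁ : g₁ x ≤ ((2 * t : ℝ≥0) : ℝ≥0∞) * b₁ :=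
        (ENNReal.div_le_iff hb₁0.ne' hb₁t).mp hc₁
      have hg₂ : g₂ x ≤ ((2 * t : ℝ≥0) : ℝ≥0∞) * b₂ :=
        (ENNReal.div_le_iff hb₂0.ne' hb₂t).mp hc₂
      have : g x ≤ (t : ℝ≥0∞) * (4 * (b₁ + b₂)) := by
        calc g x ≤ g₁ x + g₂ x := h x hxE
        _ ≤ ((2 * t : ℝ≥0) : ℝ≥0∞) * b₁ + ((2 * t : ℝ≥0) : ℝ≥0∞) * b₂ := add_le_add hg₁ hg₂
        _ = ((2 * t : ℝ≥0) : ℝ≥0∞) * (b₁ + b₂) := (mul_add _ _ _).symm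
        _ ≤ (t : ℝ≥0∞) * (4 * (b₁ + b₂)) := by
              push_cast
              rw [show (t : ℝ≥0∞) * (4 * (b₁ + b₂)) = (4 : ℝ≥0∞) * (t : ℝ≥0∞) * (b₁ + b₂) by ring,
                show (2 : ℝ≥0∞) * (t : ℝ≥0∞) * (b₁ + b₂) = (2 : ℝ≥0∞) * (t : ℝ≥0∞) * (b₁ + b₂) from rfl]
              gcongr
              norm_num
      exact absurd hgx (not_lt.mpr this)
    have half : ∀ (gg : X → ℝ≥0∞) (bb : ℝ≥0∞),
        (∀ t : ℝ≥0, 0 < t → Φ.toFun t * μ {x | x ∈ E ∧ (t : ℝ≥0∞) < gg x / bb} ≤ 1) →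
        Φ.toFun t * μ {x | x ∈ E ∧ ((2 * t : ℝ≥0) : ℝ≥0∞) < gg x / bb} ≤ 1 / 2 := by
      intro gg bb H
      have h2t := H (2 * t) (by positivity)
      have hmul : (2 : ℝ≥0∞) * Φ.toFun t ≤ Φ.toFun (2 * t) := by
        have := Φ.nat_mul_le 2 t
        simpa using this
      rw [ENNReal.le_div_iff_mul_le (Or.inl two_ne_zero) (Or.inl ENNReal.ofNat_ne_top)]
      calc Φ.toFun t * μ {x | x ∈ E ∧ ((2 * t : ℝ≥0) : ℝ≥0∞) < gg x / bb} * 2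
          = 2 * Φ.toFun t * μ {x | x ∈ E ∧ ((2 * t : ℝ≥0) : ℝ≥0∞) < gg x / bb} := by ring
      _ ≤ Φ.toFun (2 * t) * μ {x | x ∈ E ∧ ((2 * t : ℝ≥0) : ℝ≥0∞) < gg x / bb} :=
            mul_le_mul_left hmul _
      _ ≤ 1 := h2t
    calc Φ.toFun t * μ {x | x ∈ E ∧ (t : ℝ≥0∞) < g x / (4 * (b₁ + b₂))}
        ≤ Φ.toFun t * (μ {x | x ∈ E ∧ ((2 * t : ℝ≥0) : ℝ≥0∞) < g₁ x / b₁} +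
            μ {x | x ∈ E ∧ ((2 * t : ℝ≥0) : ℝ≥0∞) < g₂ x / b₂}) :=
          mul_le_mul_right ((measure_mono hsub).trans (measure_union_le _ _)) _
    _ = Φ.toFun t * μ {x | x ∈ E ∧ ((2 * t : ℝ≥0) : ℝ≥0∞) < g₁ x / b₁} +
          Φ.toFun t * μ {x | x ∈ E ∧ ((2 * t : ℝ≥0) : ℝ≥0∞) < g₂ x / b₂} := mul_add _ _ _
    _ ≤ 1 / 2 + 1 / 2 := add_le_add (half g₁ b₁ H₁) (half g₂ b₂ H₂)
    _ = 1 := ENNReal.add_halves 1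
  have step2 : ∀ b₁, W₁ < b₁ → b₁ ≠ ⊤ → wLuxNormE Φ μ E g ≤ 4 * b₁ + 4 * W₂ := by
    intro b₁ hb₁ hb₁t
    exact le_add_mul_of_forall_lt' (by norm_num) h2 (fun b₂ hb₂ hb₂t => step b₁ hb₁ hb₁t b₂ hb₂ hb₂t)
  have step3 : wLuxNormE Φ μ E g ≤ 4 * W₂ + 4 * W₁ :=
    le_add_mul_of_forall_lt' (by norm_num) h1
      (fun b₁ hb₁ hb₁t => (step2 b₁ hb₁ hb₁t).trans_eq (add_comm _ _))
  calc wLuxNormE Φ μ E g ≤ 4 * W₂ + 4 * W₁ := step3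
  _ = 4 * (W₁ + W₂) := by ring

lemma luxNormE_indicator_eq {F0 : X → ℝ≥0∞} (hE : MeasurableSet E) :
    luxNormE Φ μ Set.univ (E.indicator F0) = luxNormE Φ μ E F0 := by
  have hint : ∀ b : ℝ≥0∞,
      ∫⁻ x, Φ.ext (E.indicator F0 x / b) ∂μ = ∫⁻ x in E, Φ.ext (F0 x / b) ∂μ := by
    intro b
    rw [← lintegral_indicator hE]
    congr 1
    ext x
    by_cases hx : x ∈ E
    · simp [Set.indicator_of_mem hx]
    · simp [Set.indicator_of_notMem hx, ENNReal.zero_div, Φ.ext_zero]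
  unfold luxNormE
  congr 1
  ext b
  simp only [Measure.restrict_univ, Set.mem_setOf_eq]
  rw [hint b]

end WLuxLemmas
section MaximalLemmas

open MeasureTheory Metric Set

/-- auxiliary maximal operator for `ℝ≥0∞`-valued functions -/
def maxEN (n : ℕ) (G : En n → ℝ≥0∞) (z : En n) : ℝ≥0∞ :=
  ⨆ (t : ℝ) (_ : 0 < t), (volume (ball z t))⁻¹ * ∫⁻ y in ball z t, G y

lemma hlMaximal_eq_maxEN (n : ℕ) (f : En n → ℝ) :
    hlMaximal n f = maxEN n fun y => (‖f y‖₊ : ℝ≥0∞) := rfl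

lemma En.nontrivial (n : ℕ) (hn : 0 < n) : Nontrivial (En n) := by
  haveI : Nonempty (Fin n) := ⟨⟨0, hn⟩⟩
  exact inferInstance

lemma vol_ball_eq (n : ℕ) (hn : 0 < n) (z : En n) {t : ℝ} (ht : 0 ≤ t) :
    volume (ball z t) = ENNReal.ofReal (t ^ n) * volume (ball (0 : En n) 1) := by
  haveI := En.nontrivial n hn
  rw [Measure.addHaar_ball volume z ht, finrank_euclideanSpace_fin]

lemma vol_closedBall_eq (n : ℕ) (z : En n) {t : ℝ} (ht : 0 ≤ t) :
    volume (closedBall z t) = ENNReal.ofReal (t ^ n) * volume (ball (0 : En n) 1) := by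
  rw [Measure.addHaar_closedBall volume z ht, finrank_euclideanSpace_fin]

lemma vol_unit_pos (n : ℕ) : 0 < volume (ball (0 : En n) 1) :=
  measure_ball_pos volume _ one_pos

lemma vol_unit_lt_top (n : ℕ) : volume (ball (0 : En n) 1) < ⊤ := measure_ball_lt_top

/-- Weak (1,1) inequality for the maximal operator, via the Vitali covering lemma. -/
lemma weak11 (n : ℕ) (hn : 0 < n) (G : En n → ℝ≥0∞) {β : ℝ≥0∞} (hβ0 : β ≠ 0) (hβt : β ≠ ⊤) :
    β * volume {z | β < maxEN n G z} ≤ ENNReal.ofReal (4 ^ n) * ∫⁻ y, G y := by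
  classical
  set V := volume (ball (0 : En n) 1) with hV
  have hV0 : V ≠ 0 := (vol_unit_pos n).ne'
  have hVt : V ≠ ⊤ := (vol_unit_lt_top n).ne
  by_cases hIG : ∫⁻ y, G y ∂volume = ⊤
  · rw [hIG, ENNReal.mul_top (by positivity)]
    exact le_top
  set S := {z | β < maxEN n G z} with hS
  set Q : ℝ≥0∞ := (∫⁻ y, G y) / (β * V) with hQ
  have hQt : Q ≠ ⊤ := by
    apply ne_of_lt
    exact ENNReal.div_lt_top hIG (by simp [hβ0, hV0])
  set R₀ : ℝ := max 1 Q.toReal with hR₀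
  have hz : ∀ z ∈ S, ∃ t : ℝ, 0 < t ∧ t ≤ R₀ ∧
      β * volume (ball z t) < ∫⁻ y in ball z t, G y := by
    intro z hz
    have : β < maxEN n G z := hz
    rw [maxEN] at this
    obtain ⟨t, ht⟩ := lt_iSup_iff.mp this
    obtain ⟨ht0, hlt⟩ := lt_iSup_iff.mp ht
    have hvol0 : volume (ball z t) ≠ 0 := (measure_ball_pos volume z ht0).ne'
    have hvolt : volume (ball z t) ≠ ⊤ := measure_ball_lt_top.ne
    have hmul : β * volume (ball z t) < ∫⁻ y in ball z t, G y := by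
      have h' : β < (∫⁻ y in ball z t, G y) / volume (ball z t) := by
        rwa [ENNReal.div_eq_inv_mul]
      exact (ENNReal.lt_div_iff_mul_lt (Or.inl hvol0) (Or.inl hvolt)).mp h'
    refine ⟨t, ht0, ?_, hmul⟩
    -- radius bound
    have hle : β * volume (ball z t) ≤ ∫⁻ y, G y :=
      le_trans hmul.le (lintegral_mono_set (subset_univ _) |>.trans_eq (by rw [Measure.restrict_univ]))
    rw [vol_ball_eq n hn z ht0.le] at hle
    have hofr : ENNReal.ofReal (t ^ n) ≤ Q := by
      rw [hQ, ENNReal.le_div_iff_mul_le (Or.inl (by simp [hβ0, hV0])) (Or.inl (by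
        simp [hβt, hVt, ENNReal.mul_eq_top]))]
      calc ENNReal.ofReal (t ^ n) * (β * V) = β * (ENNReal.ofReal (t ^ n) * V) := by ring
      _ ≤ ∫⁻ y, G y := hle
    have htn : t ^ n ≤ Q.toReal := by
      have := ENNReal.toReal_mono hQt hofr
      rwa [ENNReal.toReal_ofReal (by positivity)] at this
    rcases le_or_gt t 1 with h1 | h1
    · exact h1.trans (le_max_left _ _)
    · calc t ≤ t ^ n := le_self_pow₀ h1.le hn.ne'
      _ ≤ Q.toReal := htn
      _ ≤ R₀ := le_max_right _ _
  choose! rad hrad0 hradR hradI using hz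
  obtain ⟨u, hu_sub, hu_disj, hu_cov⟩ :=
    Vitali.exists_disjoint_subfamily_covering_enlargement_closedBall S id rad R₀
      (fun a ha => hradR a ha) 4 (by norm_num)
  have hucount : u.Countable := by
    refine hu_disj.countable_of_nonempty_interior fun b hb => ?_
    exact ⟨b, ball_subset_interior_closedBall (mem_ball_self (hrad0 b (hu_sub hb)))⟩
  have hcover : S ⊆ ⋃ b ∈ u, closedBall b (4 * rad b) := by
    intro z hzS
    obtain ⟨b, hbu, hsub⟩ := hu_cov z hzS
    exact mem_biUnion hbu (hsub (mem_closedBall_self (hrad0 z hzS).le))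
  have hdisj_balls : u.PairwiseDisjoint fun b => ball b (rad b) :=
    hu_disj.mono fun b => ball_subset_closedBall
  calc β * volume S ≤ β * ∑' b : u, volume (closedBall (b : En n) (4 * rad (b : En n))) :=
        mul_le_mul_right ((measure_mono hcover).trans (measure_biUnion_le volume hucount _)) _
  _ = β * ∑' b : u, ENNReal.ofReal (4 ^ n) * volume (ball (b : En n) (rad (b : En n))) := by
        congr 1
        refine tsum_congr fun b => ?_
        have h0 : (0 : ℝ) ≤ rad (b : En n) := (hrad0 (b : En n) (hu_sub b.2)).le
        rw [vol_closedBall_eq n (b : En n) (by positivity), vol_ball_eq n hn (b : En n) h0]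
        rw [mul_pow, ENNReal.ofReal_mul (by positivity)]
        ring
  _ = ENNReal.ofReal (4 ^ n) * ∑' b : u, β * volume (ball (b : En n) (rad (b : En n))) := by
        rw [ENNReal.tsum_mul_left, ENNReal.tsum_mul_left]
        ring
  _ ≤ ENNReal.ofReal (4 ^ n) * ∑' b : u, ∫⁻ y in ball (b : En n) (rad (b : En n)), G y := by
        gcongr with b
        exact (hradI (b : En n) (hu_sub b.2)).le
  _ = ENNReal.ofReal (4 ^ n) * ∫⁻ y in ⋃ b ∈ u, ball b (rad b), G y := by
        rw [lintegral_biUnion hucount (fun b _ => measurableSet_ball) hdisj_balls]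
  _ ≤ ENNReal.ofReal (4 ^ n) * ∫⁻ y, G y := by
        exact mul_le_mul_right (setLIntegral_le_lintegral _ _) _

end MaximalLemmas
section MaxWeakType

open MeasureTheory Metric Set

/-- Weak type boundedness of the maximal operator on Orlicz spaces, for an arbitrary
Young function. -/
lemma wlux_maxEN (n : ℕ) (hn : 0 < n) (Φ : YoungFunction) (G : En n → ℝ≥0∞)
    (U : Set (En n)) :
    wLuxNormE Φ volume U (maxEN n G) ≤
      (2 * (4 ^ n + 1) : ℕ) * luxNormE Φ volume Set.univ G := by
  classical
  set k : ℕ := 4 ^ n + 1 with hk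
  have hk1 : 1 ≤ k := Nat.le_add_left 1 _
  have hDk : ENNReal.ofReal (4 ^ n) ≤ (k : ℝ≥0∞) := by
    rw [hk]
    push_cast
    calc ENNReal.ofReal (4 ^ n) = (4 : ℝ≥0∞) ^ n := by
          rw [← ENNReal.ofReal_ofNat 4, ← ENNReal.ofReal_pow (by norm_num)]
    _ ≤ (4 : ℝ≥0∞) ^ n + 1 := le_self_add
  set κ : ℕ := 2 * k with hκ
  have hκ0 : (κ : ℝ≥0∞) ≠ 0 := Nat.cast_ne_zero.mpr (by positivity)
  have hκt : (κ : ℝ≥0∞) ≠ ⊤ := ENNReal.natCast_ne_top κ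
  set L := luxNormE Φ volume Set.univ G with hL
  rcases eq_or_ne L ⊤ with hLt | hLt
  · rw [hLt, ENNReal.mul_top hκ0]
    exact le_top
  have key : ∀ b, L < b → b ≠ ⊤ → wLuxNormE Φ volume U (maxEN n G) ≤ (κ : ℝ≥0∞) * b := by
    intro b hb hbt
    obtain ⟨hb0, hint⟩ := lux_adm_of_lt Φ hb
    rw [Measure.restrict_univ] at hint
    refine wLuxNormE_le Φ (zero_lt_iff.mpr (mul_ne_zero hκ0 hb0.ne')) fun t ht => ?_
    -- constants
    set s₀ : ℝ≥0 := (k : ℝ≥0) * t with hs₀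
    have hs₀0 : s₀ ≠ 0 := mul_ne_zero (Nat.cast_ne_zero.mpr (by positivity)) ht.ne'
    set β : ℝ≥0∞ := (s₀ : ℝ≥0∞) * b with hβ
    have hβ0 : β ≠ 0 := by
      simp only [hβ, ne_eq, mul_eq_zero, not_or]
      exact ⟨by exact_mod_cast hs₀0, hb0.ne'⟩
    have hβt : β ≠ ⊤ := mul_ne_top ENNReal.coe_ne_top hbt
    set H : En n → ℝ≥0∞ := fun y => if β < G y then G y else 0 with hH
    -- pointwise comparison of maximal functions
    have hmax : ∀ z, maxEN n G z ≤ β + maxEN n H z := by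
      intro z
      rw [maxEN]
      refine iSup_le fun t' => iSup_le fun ht' => ?_
      have hGH : ∀ y, G y ≤ β + H y := by
        intro y
        by_cases hy : β < G y
        · rw [hH]; simp only [if_pos hy]; exact le_add_self
        · rw [hH]; simp only [if_neg hy, add_zero]; exact not_lt.mp hy
      have hvol0 : volume (ball z t') ≠ 0 := (measure_ball_pos volume z ht').ne'
      have hvolt : volume (ball z t') ≠ ⊤ := measure_ball_lt_top.ne
      calc (volume (ball z t'))⁻¹ * ∫⁻ y in ball z t', G y
          ≤ (volume (ball z t'))⁻¹ * ∫⁻ y in ball z t', (β + H y) :=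
            mul_le_mul_right (lintegral_mono hGH) _
      _ = (volume (ball z t'))⁻¹ * (β * volume (ball z t') + ∫⁻ y in ball z t', H y) := by
            rw [lintegral_add_left measurable_const, setLIntegral_const]
      _ = β * ((volume (ball z t'))⁻¹ * volume (ball z t')) +
            (volume (ball z t'))⁻¹ * ∫⁻ y in ball z t', H y := by ring
      _ ≤ β + maxEN n H z := by
            refine add_le_add ?_ ?_
            · rw [ENNReal.inv_mul_cancel hvol0 hvolt, mul_one]
            · exact le_iSup₂_of_le t' ht' le_rfl
    -- set inclusion
    have hsub : {x | x ∈ U ∧ (t : ℝ≥0∞) < maxEN n G x / ((κ : ℝ≥0∞) * b)} ⊆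
        {z | β < maxEN n H z} := by
      rintro x ⟨-, hx⟩
      have h1 : (t : ℝ≥0∞) * ((κ : ℝ≥0∞) * b) < maxEN n G x :=
        (ENNReal.lt_div_iff_mul_lt (Or.inl (mul_ne_zero hκ0 hb0.ne')) (Or.inl (mul_ne_top hκt hbt))).mp hx
      have h2 : (t : ℝ≥0∞) * ((κ : ℝ≥0∞) * b) = β + β := by
        rw [hβ, hs₀, hκ]
        push_cast
        ring
      rw [h2] at h1
      have h3 : β + β < β + maxEN n H x := h1.trans_le (hmax x)
      exact (ENNReal.add_lt_add_iff_left hβt).mp h3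
    -- integral bound for H
    have hHint : Φ.toFun s₀ * ∫⁻ y, H y ≤ (s₀ : ℝ≥0∞) * b := by
      have hpt : ∀ y, Φ.toFun s₀ * H y ≤ (s₀ : ℝ≥0∞) * b * Φ.ext (G y / b) := by
        intro y
        by_cases hy : β < G y
        · rw [hH]; simp only [if_pos hy]
          have hs₀u : (s₀ : ℝ≥0∞) ≤ G y / b := by
            rw [ENNReal.le_div_iff_mul_le (Or.inl hb0.ne') (Or.inl hbt)]
            exact hy.le
          have hratio : Φ.toFun s₀ * (G y / b) ≤ (s₀ : ℝ≥0∞) * Φ.ext (G y / b) :=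
            Φ.toFun_mul_le_ext hs₀u
          calc Φ.toFun s₀ * G y = Φ.toFun s₀ * (G y / b) * b := by
                rw [mul_assoc, ENNReal.div_mul_cancel hb0.ne' hbt]
          _ ≤ (s₀ : ℝ≥0∞) * Φ.ext (G y / b) * b := mul_le_mul_left hratio _
          _ = (s₀ : ℝ≥0∞) * b * Φ.ext (G y / b) := by ring
        · rw [hH]; simp only [if_neg hy, mul_zero]
          exact zero_le
      calc Φ.toFun s₀ * ∫⁻ y, H y ≤ ∫⁻ y, Φ.toFun s₀ * H y := lintegral_const_mul_le _ _
      _ ≤ ∫⁻ y, (s₀ : ℝ≥0∞) * b * Φ.ext (G y / b) := lintegral_mono hpt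
      _ = (s₀ : ℝ≥0∞) * b * ∫⁻ y, Φ.ext (G y / b) :=
            lintegral_const_mul' _ _ (mul_ne_top ENNReal.coe_ne_top hbt)
      _ ≤ (s₀ : ℝ≥0∞) * b * 1 := mul_le_mul_right hint _
      _ = (s₀ : ℝ≥0∞) * b := mul_one _
    -- weak (1,1)
    have hweak := weak11 n hn H hβ0 hβt
    -- conclude : Φ s₀ * vol {β < maxEN H} ≤ k
    have hconc : Φ.toFun s₀ * volume {z | β < maxEN n H z} ≤ (k : ℝ≥0∞) := by
      have h1 : β * (Φ.toFun s₀ * volume {z | β < maxEN n H z}) ≤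
          β * (k : ℝ≥0∞) := by
        calc β * (Φ.toFun s₀ * volume {z | β < maxEN n H z})
            = Φ.toFun s₀ * (β * volume {z | β < maxEN n H z}) := by ring
        _ ≤ Φ.toFun s₀ * (ENNReal.ofReal (4 ^ n) * ∫⁻ y, H y) := mul_le_mul_right hweak _
        _ = ENNReal.ofReal (4 ^ n) * (Φ.toFun s₀ * ∫⁻ y, H y) := by ring
        _ ≤ (k : ℝ≥0∞) * ((s₀ : ℝ≥0∞) * b) := mul_le_mul' hDk hHint
        _ = β * (k : ℝ≥0∞) := by rw [hβ]; ring
      exact (ENNReal.mul_le_mul_iff_right hβ0 hβt).mp h1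
    -- final : Φ t * vol {..} ≤ 1
    have hkmul : (k : ℝ≥0∞) * Φ.toFun t ≤ Φ.toFun s₀ := by
      have := Φ.nat_mul_le k t
      rwa [hs₀]
    have h2 : (k : ℝ≥0∞) * (Φ.toFun t *
        volume {x | x ∈ U ∧ (t : ℝ≥0∞) < maxEN n G x / ((κ : ℝ≥0∞) * b)}) ≤
        (k : ℝ≥0∞) * 1 := by
      calc (k : ℝ≥0∞) * (Φ.toFun t * volume {x | x ∈ U ∧ (t : ℝ≥0∞) < maxEN n G x / ((κ : ℝ≥0∞) * b)})
          = ((k : ℝ≥0∞) * Φ.toFun t) * volume {x | x ∈ U ∧ (t : ℝ≥0∞) < maxEN n G x / ((κ : ℝ≥0∞) * b)} := by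
            ring
      _ ≤ Φ.toFun s₀ * volume {z | β < maxEN n H z} :=
            mul_le_mul' hkmul (measure_mono hsub)
      _ ≤ (k : ℝ≥0∞) := hconc
      _ = (k : ℝ≥0∞) * 1 := (mul_one _).symm
    exact (ENNReal.mul_le_mul_iff_right (Nat.cast_ne_zero.mpr (by positivity)) (ENNReal.natCast_ne_top k)).mp h2
  exact le_mul_of_forall_lt' hκt hLt key

end MaxWeakType

/-- For any Young function `Φ`, the Hardy–Littlewood maximal operator is
bounded from `M_{Φ,φ₁}(ℝⁿ)` to `WM_{Φ,φ₂}(ℝⁿ)` under the supremal condition on `(φ₁,φ₂)`. -/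
theorem hlMaximal_orliczMorrey_weak_bounded
    (n : ℕ) (hn : 0 < n) (Φ : YoungFunction)
    (φ₁ φ₂ : En n → ℝ → ℝ)
    (hφ₁pos : ∀ (x : En n) (r : ℝ), 0 < r → 0 < φ₁ x r)
    (hφ₂pos : ∀ (x : En n) (r : ℝ), 0 < r → 0 < φ₂ x r)
    (hφ₁m : Measurable (Function.uncurry φ₁))
    (hφ₂m : Measurable (Function.uncurry φ₂))
    (C : ℝ) (hC : 0 < C)
    (hcond : ∀ (x : En n) (r : ℝ), 0 < r →
      (⨆ (t : ℝ) (_ : r < t),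
        Φ.inv (ENNReal.ofReal t ^ (-(n : ℝ))) *
          essSup (fun s : ℝ =>
              ENNReal.ofReal (φ₁ x s) / Φ.inv (ENNReal.ofReal s ^ (-(n : ℝ))))
            (volume.restrict (Ioi t))) ≤
        ENNReal.ofReal C * ENNReal.ofReal (φ₂ x r)) :
    ∃ C' : ℝ, 0 < C' ∧ ∀ f : En n → ℝ, LocallyIntegrable f volume →
      wMorreyNormE n Φ φ₂ (hlMaximal n f) ≤
        ENNReal.ofReal C' * morreyNorm n Φ φ₁ f := by
  classical
  set V := volume (ball (0 : En n) 1) with hV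
  have hV0 : V ≠ 0 := (vol_unit_pos n).ne'
  have hVt : V ≠ ⊤ := (vol_unit_lt_top n).ne
  set J : ℝ → ℝ≥0∞ := fun s => Φ.inv (ENNReal.ofReal s ^ (-(n : ℝ))) with hJ
  have hJs : ∀ s : ℝ, Φ.inv (ENNReal.ofReal s ^ (-(n : ℝ))) = J s := fun s => rfl
  -- basic facts about the exponent expression
  have hexp : ∀ s : ℝ, 0 < s →
      ENNReal.ofReal s ^ (-(n : ℝ)) = (ENNReal.ofReal (s ^ n))⁻¹ := by
    intro s hs
    rw [ENNReal.rpow_neg, ENNReal.rpow_natCast, ← ENNReal.ofReal_pow hs.le]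
  have hexp_ne_top : ∀ s : ℝ, 0 < s → ENNReal.ofReal s ^ (-(n : ℝ)) ≠ ⊤ := by
    intro s hs
    rw [hexp s hs]
    exact ENNReal.inv_ne_top.mpr (ENNReal.ofReal_pos.mpr (by positivity)).ne'
  have hexp_anti : ∀ a b : ℝ, 0 < a → a ≤ b →
      ENNReal.ofReal b ^ (-(n : ℝ)) ≤ ENNReal.ofReal a ^ (-(n : ℝ)) := by
    intro a b ha hab
    rw [hexp a ha, hexp b (ha.trans_le hab)]
    exact ENNReal.inv_le_inv.mpr (ENNReal.ofReal_le_ofReal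
      (pow_le_pow_left₀ ha.le hab n))
  have hJmono : ∀ a b : ℝ, 0 < a → a ≤ b → J b ≤ J a :=
    fun a b ha hab => Φ.inv_mono (hexp_anti a b ha hab)
  have hJfin : ∀ s : ℝ, 0 < s → J s ≠ ⊤ :=
    fun s hs => (Φ.inv_lt_top (hexp_ne_top s hs)).ne
  -- doubling for J
  have hJdouble : ∀ r : ℝ, 0 < r → J r ≤ ((2 ^ n : ℕ) : ℝ≥0∞) * J (2 * r) := by
    intro r hr
    have h2r : (0 : ℝ) < 2 * r := by linarith
    have hc0 : ((2 ^ n : ℕ) : ℝ≥0∞) ≠ 0 := Nat.cast_ne_zero.mpr (by positivity)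
    have hct : ((2 ^ n : ℕ) : ℝ≥0∞) ≠ ⊤ := ENNReal.natCast_ne_top _
    have hXY : ENNReal.ofReal ((2 * r) ^ n) = ((2 ^ n : ℕ) : ℝ≥0∞) * ENNReal.ofReal (r ^ n) := by
      rw [mul_pow, ENNReal.ofReal_mul (by positivity)]
      congr 1
      rw [show ((2 : ℝ)) ^ n = ((2 ^ n : ℕ) : ℝ) by push_cast; ring]
      exact ENNReal.ofReal_natCast _
    have harg : ENNReal.ofReal r ^ (-(n : ℝ)) ≤
        ((2 ^ n : ℕ) : ℝ≥0∞) * (ENNReal.ofReal (2 * r) ^ (-(n : ℝ))) := by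
      rw [hexp r hr, hexp _ h2r, hXY, ENNReal.mul_inv (Or.inl hc0) (Or.inl hct),
        ← mul_assoc, ENNReal.mul_inv_cancel hc0 hct, one_mul]
    calc J r ≤ Φ.inv (((2 ^ n : ℕ) : ℝ≥0∞) * (ENNReal.ofReal (2 * r) ^ (-(n : ℝ)))) :=
          Φ.inv_mono harg
    _ ≤ ((2 ^ n : ℕ) : ℝ≥0∞) * J (2 * r) := Φ.inv_nat_mul_le _ (by positivity) _
  -- constants controlling the unit-ball volume
  obtain ⟨kV, hkV⟩ := ENNReal.exists_nat_gt (ENNReal.inv_ne_top.mpr hV0)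
  have hkV0 : 0 < kV := by
    rcases Nat.eq_zero_or_pos kV with rfl | h
    · exact absurd hkV (by simp)
    · exact h
  obtain ⟨kV', hkV'⟩ := ENNReal.exists_nat_gt hVt
  have hkV'0 : 0 < kV' := by
    rcases Nat.eq_zero_or_pos kV' with rfl | h
    · exact absurd hkV' (by simp)
    · exact h
  have hvolinv_le : ∀ (x : En n) (s : ℝ), 0 < s →
      (volume (ball x s))⁻¹ ≤ (kV : ℝ≥0∞) * ENNReal.ofReal s ^ (-(n : ℝ)) := by
    intro x s hs
    have hr0 : ENNReal.ofReal (s ^ n) ≠ 0 := (ENNReal.ofReal_pos.mpr (by positivity)).ne'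
    have hrt : ENNReal.ofReal (s ^ n) ≠ ⊤ := ENNReal.ofReal_ne_top
    rw [vol_ball_eq n hn x hs.le, ENNReal.mul_inv (Or.inl hr0) (Or.inl hrt), hexp s hs]
    calc (ENNReal.ofReal (s ^ n))⁻¹ * V⁻¹ ≤ (ENNReal.ofReal (s ^ n))⁻¹ * (kV : ℝ≥0∞) :=
          mul_le_mul_right hkV.le _
    _ = (kV : ℝ≥0∞) * (ENNReal.ofReal (s ^ n))⁻¹ := mul_comm _ _
  have hinvvol_le : ∀ (x : En n) (s : ℝ), 0 < s →
      Φ.inv ((volume (ball x s))⁻¹) ≤ (kV : ℝ≥0∞) * J s := by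
    intro x s hs
    refine (Φ.inv_mono (hvolinv_le x s hs)).trans ?_
    exact Φ.inv_nat_mul_le kV hkV0 _
  have hJ_le_inv : ∀ (x : En n) (s : ℝ), 0 < s →
      J s ≤ (kV' : ℝ≥0∞) * Φ.inv ((volume (ball x s))⁻¹) := by
    intro x s hs
    have hr0 : ENNReal.ofReal (s ^ n) ≠ 0 := (ENNReal.ofReal_pos.mpr (by positivity)).ne'
    have hrt : ENNReal.ofReal (s ^ n) ≠ ⊤ := ENNReal.ofReal_ne_top
    have harg : ENNReal.ofReal s ^ (-(n : ℝ)) ≤ (kV' : ℝ≥0∞) * (volume (ball x s))⁻¹ := by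
      rw [hexp s hs, vol_ball_eq n hn x hs.le, ENNReal.mul_inv (Or.inl hr0) (Or.inl hrt)]
      calc (ENNReal.ofReal (s ^ n))⁻¹
          = V * ((ENNReal.ofReal (s ^ n))⁻¹ * V⁻¹) := by
            rw [show V * ((ENNReal.ofReal (s ^ n))⁻¹ * V⁻¹) =
              (V * V⁻¹) * (ENNReal.ofReal (s ^ n))⁻¹ by ring,
              ENNReal.mul_inv_cancel hV0 hVt, one_mul]
      _ ≤ (kV' : ℝ≥0∞) * ((ENNReal.ofReal (s ^ n))⁻¹ * V⁻¹) := mul_le_mul_left hkV'.le _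
    exact (Φ.inv_mono harg).trans (Φ.inv_nat_mul_le kV' hkV'0 _)
  -- degenerate / nondegenerate dichotomy
  by_cases hdeg : ∃ s : ℝ, 0 < s ∧ J s = 0
  · -- degenerate case : all the J's vanish, both sides are zero
    obtain ⟨s₀, hs₀0, hs₀⟩ := hdeg
    have hall : ∀ s : ℝ, 0 < s → J s = 0 := by
      intro s hs
      by_contra hJne
      -- then s < s₀ and we derive a contradiction from hcond
      have hslt : s < s₀ := by
        by_contra hge
        push_neg at hge
        exact hJne (le_antisymm (hs₀ ▸ hJmono s₀ s hs₀0 hge) zero_le)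
      have htop : essSup (fun s' : ℝ =>
          ENNReal.ofReal (φ₁ 0 s') / Φ.inv (ENNReal.ofReal s' ^ (-(n : ℝ))))
          (volume.restrict (Ioi s)) = ⊤ := by
        set e := essSup (fun s' : ℝ =>
          ENNReal.ofReal (φ₁ 0 s') / Φ.inv (ENNReal.ofReal s' ^ (-(n : ℝ))))
          (volume.restrict (Ioi s)) with he
        by_contra hne
        have hae := ENNReal.ae_le_essSup (μ := volume.restrict (Ioi s))
          (fun s' : ℝ => ENNReal.ofReal (φ₁ 0 s') / Φ.inv (ENNReal.ofReal s' ^ (-(n : ℝ))))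
        rw [Filter.eventually_iff, mem_ae_iff] at hae
        have hsub : Ioi s₀ ⊆ {s' : ℝ | ENNReal.ofReal (φ₁ 0 s') /
            Φ.inv (ENNReal.ofReal s' ^ (-(n : ℝ))) ≤ e}ᶜ := by
          intro s' hs'
          have hs'0 : 0 < s' := hs₀0.trans hs'
          have hJ' : J s' = 0 :=
            le_antisymm (hs₀ ▸ hJmono s₀ s' hs₀0 (le_of_lt hs')) zero_le
          have hdiv : ENNReal.ofReal (φ₁ 0 s') /
              Φ.inv (ENNReal.ofReal s' ^ (-(n : ℝ))) = ⊤ := by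
            rw [hJs s', hJ']
            exact ENNReal.div_zero (ENNReal.ofReal_pos.mpr (hφ₁pos 0 s' hs'0)).ne'
          simp only [Set.mem_compl_iff, Set.mem_setOf_eq, hdiv]
          exact fun hc => hne (top_le_iff.mp hc)
        have h0 : (volume.restrict (Ioi s)) (Ioi s₀) = 0 := measure_mono_null hsub hae
        rw [Measure.restrict_apply measurableSet_Ioi,
          Set.inter_eq_self_of_subset_left (Ioi_subset_Ioi hslt.le)] at h0
        simp [Real.volume_Ioi] at h0
      have hinst := hcond 0 (s / 2) (by linarith)
      have hwit : Φ.inv (ENNReal.ofReal s ^ (-(n : ℝ))) *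
          essSup (fun s' : ℝ => ENNReal.ofReal (φ₁ 0 s') /
            Φ.inv (ENNReal.ofReal s' ^ (-(n : ℝ)))) (volume.restrict (Ioi s)) ≤
          ENNReal.ofReal C * ENNReal.ofReal (φ₂ 0 (s / 2)) := by
        refine le_trans ?_ hinst
        exact le_iSup₂ (f := fun (t : ℝ) (_ : s / 2 < t) =>
          Φ.inv (ENNReal.ofReal t ^ (-(n : ℝ))) *
            essSup (fun s' : ℝ => ENNReal.ofReal (φ₁ 0 s') /
              Φ.inv (ENNReal.ofReal s' ^ (-(n : ℝ)))) (volume.restrict (Ioi t)))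
          s (by linarith : s / 2 < s)
      rw [htop, hJs s, ENNReal.mul_top hJne] at hwit
      exact (mul_ne_top ENNReal.ofReal_ne_top ENNReal.ofReal_ne_top) (top_le_iff.mp hwit)
    refine ⟨1, one_pos, fun f hf => ?_⟩
    have hzero : wMorreyNormE n Φ φ₂ (hlMaximal n f) = 0 := by
      rw [wMorreyNormE]
      refine le_antisymm (iSup_le fun x => iSup_le fun r => iSup_le fun hr => ?_) zero_le
      rw [hJs r, hall r hr, mul_zero, zero_mul]
    rw [hzero]
    exact zero_le
  · push_neg at hdeg
    -- nondegenerate case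
    set κn : ℕ := 2 * (4 ^ n + 1) with hκn
    set cst : ℝ≥0∞ := 4 * (((2 ^ n : ℕ) : ℝ≥0∞) * (κn : ℝ≥0∞) +
      (kV' : ℝ≥0∞) * (2 * ENNReal.ofReal (3 ^ n) * (kV : ℝ≥0∞))) with hcst
    have hcst_ne : cst * ENNReal.ofReal C ≠ ⊤ := by
      rw [hcst]
      refine mul_ne_top (mul_ne_top (by norm_num) ?_) ENNReal.ofReal_ne_top
      refine ENNReal.add_ne_top.mpr ⟨mul_ne_top (ENNReal.natCast_ne_top _)
        (ENNReal.natCast_ne_top _), mul_ne_top (ENNReal.natCast_ne_top _)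
        (mul_ne_top (mul_ne_top (by norm_num) ENNReal.ofReal_ne_top)
          (ENNReal.natCast_ne_top _))⟩
    refine ⟨(cst * ENNReal.ofReal C).toReal + 1, by positivity, fun f hf => ?_⟩
    set N := morreyNorm n Φ φ₁ f with hN
    rcases eq_or_ne N ⊤ with hNt | hNt
    · rw [hNt, ENNReal.mul_top (ENNReal.ofReal_pos.mpr (by positivity)).ne']
      exact le_top
    have hC'big : cst * ENNReal.ofReal C ≤
        ENNReal.ofReal ((cst * ENNReal.ofReal C).toReal + 1) := by
      conv_lhs => rw [← ENNReal.ofReal_toReal hcst_ne]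
      exact ENNReal.ofReal_le_ofReal (by
        linarith [ENNReal.toReal_nonneg (a := cst * ENNReal.ofReal C)])
    set F : En n → ℝ≥0∞ := fun y => (‖f y‖₊ : ℝ≥0∞) with hF
    have hNball : ∀ (x : En n) (s : ℝ), 0 < s →
        (ENNReal.ofReal (φ₁ x s))⁻¹ * J s * luxNormE Φ volume (ball x s) F ≤ N := by
      intro x s hs
      rw [hN, morreyNorm, morreyNormE]
      refine le_iSup_of_le x ?_
      refine le_iSup_of_le s ?_
      refine le_iSup_of_le hs ?_
      exact le_rfl
    rw [wMorreyNormE]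
    refine iSup_le fun x => iSup_le fun r => iSup_le fun hr => ?_
    have hr2 : (0 : ℝ) < 2 * r := by linarith
    set K : ℝ≥0∞ := ENNReal.ofReal C * ENNReal.ofReal (φ₂ x r) * N with hK
    have hKt : K ≠ ⊤ :=
      mul_ne_top (mul_ne_top ENNReal.ofReal_ne_top ENNReal.ofReal_ne_top) hNt
    set I2 := J (2 * r) with hI2
    have hI20 : I2 ≠ 0 := hdeg _ hr2
    have hI2t : I2 ≠ ⊤ := hJfin _ hr2
    have hterm : I2 * essSup (fun s : ℝ => ENNReal.ofReal (φ₁ x s) / J s)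
        (volume.restrict (Ioi (2 * r))) ≤
        ENNReal.ofReal C * ENNReal.ofReal (φ₂ x r) := by
      refine le_trans ?_ (hcond x r hr)
      exact le_iSup₂ (f := fun (t : ℝ) (_ : r < t) =>
        Φ.inv (ENNReal.ofReal t ^ (-(n : ℝ))) *
          essSup (fun s : ℝ => ENNReal.ofReal (φ₁ x s) /
            Φ.inv (ENNReal.ofReal s ^ (-(n : ℝ)))) (volume.restrict (Ioi t)))
        (2 * r) (by linarith : r < 2 * r)
    have hae2 : ∀ᵐ s ∂(volume.restrict (Ioi (2 * r))),
        I2 * luxNormE Φ volume (ball x s) F ≤ K := by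
      have hae := ENNReal.ae_le_essSup (μ := volume.restrict (Ioi (2 * r)))
        (fun s : ℝ => ENNReal.ofReal (φ₁ x s) / J s)
      filter_upwards [hae, ae_restrict_mem measurableSet_Ioi] with s hs1 hs2
      have hs2r : 2 * r < s := hs2
      have hs0 : 0 < s := lt_trans hr2 hs2r
      have hJs0 : J s ≠ 0 := hdeg s hs0
      have hJst : J s ≠ ⊤ := hJfin s hs0
      have hp0 : ENNReal.ofReal (φ₁ x s) ≠ 0 :=
        (ENNReal.ofReal_pos.mpr (hφ₁pos x s hs0)).ne'
      have hpt : ENNReal.ofReal (φ₁ x s) ≠ ⊤ := ENNReal.ofReal_ne_top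
      have hNs := hNball x s hs0
      have bL : J s * luxNormE Φ volume (ball x s) F ≤ ENNReal.ofReal (φ₁ x s) * N := by
        calc J s * luxNormE Φ volume (ball x s) F
            = ENNReal.ofReal (φ₁ x s) *
              ((ENNReal.ofReal (φ₁ x s))⁻¹ * J s * luxNormE Φ volume (ball x s) F) := by
              rw [← mul_assoc, ← mul_assoc, ENNReal.mul_inv_cancel hp0 hpt, one_mul]
        _ ≤ ENNReal.ofReal (φ₁ x s) * N := mul_le_mul_right hNs _
      have hpe : ENNReal.ofReal (φ₁ x s) ≤
          essSup (fun s : ℝ => ENNReal.ofReal (φ₁ x s) / J s)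
            (volume.restrict (Ioi (2 * r))) * J s :=
        (ENNReal.div_le_iff hJs0 hJst).mp hs1
      have hchain : J s * (I2 * luxNormE Φ volume (ball x s) F) ≤ J s * K := by
        calc J s * (I2 * luxNormE Φ volume (ball x s) F)
            = I2 * (J s * luxNormE Φ volume (ball x s) F) := by ring
        _ ≤ I2 * (ENNReal.ofReal (φ₁ x s) * N) := mul_le_mul_right bL _
        _ ≤ I2 * (essSup (fun s : ℝ => ENNReal.ofReal (φ₁ x s) / J s)
              (volume.restrict (Ioi (2 * r))) * J s * N) :=
              mul_le_mul_right (mul_le_mul_left hpe _) _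
        _ = (I2 * essSup (fun s : ℝ => ENNReal.ofReal (φ₁ x s) / J s)
              (volume.restrict (Ioi (2 * r)))) * (J s * N) := by ring
        _ ≤ (ENNReal.ofReal C * ENNReal.ofReal (φ₂ x r)) * (J s * N) :=
              mul_le_mul_left hterm _
        _ = J s * K := by rw [hK]; ring
      exact (ENNReal.mul_le_mul_iff_right hJs0 hJst).mp hchain
    have hgood : ∀ a b : ℝ, 2 * r ≤ a → a < b → ∃ s : ℝ, a < s ∧ s < b ∧
        I2 * luxNormE Φ volume (ball x s) F ≤ K := by
      intro a b hab hlt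
      by_contra hno
      push_neg at hno
      rw [Filter.eventually_iff, mem_ae_iff] at hae2
      have hsub : Ioo a b ⊆ {s : ℝ | I2 * luxNormE Φ volume (ball x s) F ≤ K}ᶜ :=
        fun s hs => not_le.mpr (hno s hs.1 hs.2)
      have h0 : (volume.restrict (Ioi (2 * r))) (Ioo a b) = 0 :=
        measure_mono_null hsub hae2
      have hIoo : Ioo a b ∩ Ioi (2 * r) = Ioo a b :=
        Set.inter_eq_self_of_subset_left (fun s hs => lt_of_le_of_lt hab hs.1)
      rw [Measure.restrict_apply measurableSet_Ioo, hIoo, Real.volume_Ioo] at h0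
      exact absurd h0 (ENNReal.ofReal_pos.mpr (by linarith)).ne'
    set AFar : ℝ≥0∞ := 2 * ENNReal.ofReal (3 ^ n) * (kV : ℝ≥0∞) * K with hAFar
    have hfar : ∀ z ∈ ball x r, ∀ t : ℝ, r ≤ t →
        (volume (ball z t))⁻¹ * ∫⁻ y in ball z t, F y ≤ AFar := by
      intro z hz t htr
      have ht0 : 0 < t := lt_of_lt_of_le hr htr
      obtain ⟨s, hs1, hs2, hsK⟩ := hgood (t + r) (t + 2 * r) (by linarith) (by linarith)
      have hs0 : 0 < s := by linarith
      have hzs : ball z t ⊆ ball x s := by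
        intro y hy
        rw [mem_ball] at hy ⊢
        have hzx : dist z x < r := mem_ball.mp hz
        calc dist y x ≤ dist y z + dist z x := dist_triangle y z x
        _ < t + r := by linarith
        _ < s := hs1
      have hluxfin : luxNormE Φ volume (ball x s) F ≠ ⊤ := by
        intro hbad
        rw [hbad, ENNReal.mul_top hI20] at hsK
        exact hKt (top_le_iff.mp hsK)
      have hint := lintegral_le_lux Φ (E := ball x s) (g := F)
        measure_ball_lt_top.ne hluxfin
      have hratio : volume (ball x s) * (volume (ball z t))⁻¹ ≤ ENNReal.ofReal (3 ^ n) := by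
        have ht0n : ENNReal.ofReal (t ^ n) ≠ 0 := (ENNReal.ofReal_pos.mpr (by positivity)).ne'
        have htt : ENNReal.ofReal (t ^ n) ≠ ⊤ := ENNReal.ofReal_ne_top
        rw [vol_ball_eq n hn x hs0.le, vol_ball_eq n hn z ht0.le,
          ENNReal.mul_inv (Or.inl ht0n) (Or.inl htt)]
        have hsn : ENNReal.ofReal (s ^ n) ≤ ENNReal.ofReal (3 ^ n) * ENNReal.ofReal (t ^ n) := by
          rw [← ENNReal.ofReal_mul (by positivity)]
          refine ENNReal.ofReal_le_ofReal ?_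
          calc s ^ n ≤ (3 * t) ^ n := pow_le_pow_left₀ hs0.le (by linarith) n
          _ = 3 ^ n * t ^ n := mul_pow 3 t n
        calc ENNReal.ofReal (s ^ n) * V * ((ENNReal.ofReal (t ^ n))⁻¹ * V⁻¹)
            = (ENNReal.ofReal (s ^ n) * (ENNReal.ofReal (t ^ n))⁻¹) * (V * V⁻¹) := by ring
        _ = ENNReal.ofReal (s ^ n) * (ENNReal.ofReal (t ^ n))⁻¹ := by
              rw [ENNReal.mul_inv_cancel hV0 hVt, mul_one]
        _ ≤ (ENNReal.ofReal (3 ^ n) * ENNReal.ofReal (t ^ n)) * (ENNReal.ofReal (t ^ n))⁻¹ :=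
              mul_le_mul_left hsn _
        _ = ENNReal.ofReal (3 ^ n) * (ENNReal.ofReal (t ^ n) * (ENNReal.ofReal (t ^ n))⁻¹) :=
              mul_assoc _ _ _
        _ ≤ ENNReal.ofReal (3 ^ n) := by
              rw [ENNReal.mul_inv_cancel ht0n htt, mul_one]
      calc (volume (ball z t))⁻¹ * ∫⁻ y in ball z t, F y
          ≤ (volume (ball z t))⁻¹ * ∫⁻ y in ball x s, F y :=
            mul_le_mul_right (lintegral_mono_set hzs) _
      _ ≤ (volume (ball z t))⁻¹ *
            (2 * volume (ball x s) * Φ.inv ((volume (ball x s))⁻¹) *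
              luxNormE Φ volume (ball x s) F) := mul_le_mul_right hint _
      _ = (2 * (volume (ball x s) * (volume (ball z t))⁻¹)) *
            (Φ.inv ((volume (ball x s))⁻¹) * luxNormE Φ volume (ball x s) F) := by ring
      _ ≤ (2 * ENNReal.ofReal (3 ^ n)) *
            (((kV : ℝ≥0∞) * J s) * luxNormE Φ volume (ball x s) F) :=
            mul_le_mul' (mul_le_mul_right hratio _)
              (mul_le_mul_left (hinvvol_le x s hs0) _)
      _ = 2 * ENNReal.ofReal (3 ^ n) * (kV : ℝ≥0∞) *
            (J s * luxNormE Φ volume (ball x s) F) := by ring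
      _ ≤ 2 * ENNReal.ofReal (3 ^ n) * (kV : ℝ≥0∞) *
            (I2 * luxNormE Φ volume (ball x s) F) :=
            mul_le_mul_right (mul_le_mul_left (hJmono (2 * r) s hr2 (by linarith)) _) _
      _ ≤ 2 * ENNReal.ofReal (3 ^ n) * (kV : ℝ≥0∞) * K := mul_le_mul_right hsK _
    set G : En n → ℝ≥0∞ := (ball x (2 * r)).indicator F with hG
    have hdec : ∀ z ∈ ball x r, hlMaximal n f z ≤ maxEN n G z + AFar := by
      intro z hz
      rw [hlMaximal_eq_maxEN, maxEN]
      refine iSup_le fun t => iSup_le fun ht => ?_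
      rcases lt_or_ge t r with htr | htr
      · have hsub2 : ball z t ⊆ ball x (2 * r) := by
          intro y hy
          rw [mem_ball] at hy ⊢
          have hzx : dist z x < r := mem_ball.mp hz
          calc dist y x ≤ dist y z + dist z x := dist_triangle y z x
          _ < 2 * r := by linarith
        have hFG : ∫⁻ y in ball z t, F y ≤ ∫⁻ y in ball z t, G y := by
          refine setLIntegral_mono' measurableSet_ball fun y hy => ?_
          rw [hG, Set.indicator_of_mem (hsub2 hy)]
        refine le_trans ?_ le_self_add
        calc (volume (ball z t))⁻¹ * ∫⁻ y in ball z t, F y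
            ≤ (volume (ball z t))⁻¹ * ∫⁻ y in ball z t, G y := mul_le_mul_right hFG _
        _ ≤ maxEN n G z := le_iSup₂_of_le t ht le_rfl
      · exact le_trans (hfar z hz t htr) le_add_self
    have hW1 : J r * wLuxNormE Φ volume (ball x r) (maxEN n G) ≤
        ((2 ^ n : ℕ) : ℝ≥0∞) * (κn : ℝ≥0∞) * K := by
      obtain ⟨s', hs'1, hs'2, hs'K⟩ := hgood (2 * r) (3 * r) le_rfl (by linarith)
      have hmax := wlux_maxEN n hn Φ G (ball x r)
      have hGlux : luxNormE Φ volume Set.univ G = luxNormE Φ volume (ball x (2 * r)) F :=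
        luxNormE_indicator_eq Φ measurableSet_ball
      have hmono : luxNormE Φ volume (ball x (2 * r)) F ≤ luxNormE Φ volume (ball x s') F :=
        luxNormE_mono_set Φ (ball_subset_ball (by linarith))
      calc J r * wLuxNormE Φ volume (ball x r) (maxEN n G)
          ≤ (((2 ^ n : ℕ) : ℝ≥0∞) * I2) * ((κn : ℝ≥0∞) * luxNormE Φ volume Set.univ G) :=
            mul_le_mul' (hJdouble r hr) hmax
      _ = ((2 ^ n : ℕ) : ℝ≥0∞) * (κn : ℝ≥0∞) *
            (I2 * luxNormE Φ volume (ball x (2 * r)) F) := by rw [hGlux]; ring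
      _ ≤ ((2 ^ n : ℕ) : ℝ≥0∞) * (κn : ℝ≥0∞) *
            (I2 * luxNormE Φ volume (ball x s') F) :=
            mul_le_mul_right (mul_le_mul_right hmono _) _
      _ ≤ ((2 ^ n : ℕ) : ℝ≥0∞) * (κn : ℝ≥0∞) * K := mul_le_mul_right hs'K _
    have hW2 : J r * wLuxNormE Φ volume (ball x r) (fun _ => AFar) ≤
        (kV' : ℝ≥0∞) * AFar := by
      have hb := wlux_le_of_bounded Φ (μ := volume) (E := ball x r) (g := fun _ => AFar) (A := AFar)
        (fun _ _ => le_rfl)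
      calc J r * wLuxNormE Φ volume (ball x r) (fun _ => AFar)
          ≤ ((kV' : ℝ≥0∞) * Φ.inv ((volume (ball x r))⁻¹)) *
            (AFar / Φ.inv ((volume (ball x r))⁻¹)) := mul_le_mul' (hJ_le_inv x r hr) hb
      _ = (kV' : ℝ≥0∞) * (Φ.inv ((volume (ball x r))⁻¹) *
            (AFar / Φ.inv ((volume (ball x r))⁻¹))) := mul_assoc _ _ _
      _ ≤ (kV' : ℝ≥0∞) * AFar := mul_le_mul_right (mul_div_le' _ _) _
    have hwsum : wLuxNormE Φ volume (ball x r) (hlMaximal n f) ≤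
        4 * (wLuxNormE Φ volume (ball x r) (maxEN n G) +
          wLuxNormE Φ volume (ball x r) (fun _ => AFar)) :=
      wlux_add_le Φ hdec
    have hφ₂0 : ENNReal.ofReal (φ₂ x r) ≠ 0 := (ENNReal.ofReal_pos.mpr (hφ₂pos x r hr)).ne'
    have hφ₂t : ENNReal.ofReal (φ₂ x r) ≠ ⊤ := ENNReal.ofReal_ne_top
    have hmain : J r * wLuxNormE Φ volume (ball x r) (hlMaximal n f) ≤
        cst * ENNReal.ofReal C * ENNReal.ofReal (φ₂ x r) * N := by
      calc J r * wLuxNormE Φ volume (ball x r) (hlMaximal n f)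
          ≤ J r * (4 * (wLuxNormE Φ volume (ball x r) (maxEN n G) +
              wLuxNormE Φ volume (ball x r) (fun _ => AFar))) := mul_le_mul_right hwsum _
      _ = 4 * (J r * wLuxNormE Φ volume (ball x r) (maxEN n G) +
              J r * wLuxNormE Φ volume (ball x r) (fun _ => AFar)) := by ring
      _ ≤ 4 * (((2 ^ n : ℕ) : ℝ≥0∞) * (κn : ℝ≥0∞) * K + (kV' : ℝ≥0∞) * AFar) :=
            mul_le_mul_right (add_le_add hW1 hW2) _
      _ = cst * K := by rw [hcst, hAFar]; ring
      _ = cst * ENNReal.ofReal C * ENNReal.ofReal (φ₂ x r) * N := by rw [hK]; ring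
    calc (ENNReal.ofReal (φ₂ x r))⁻¹ * J r *
          wLuxNormE Φ volume (ball x r) (hlMaximal n f)
        = (ENNReal.ofReal (φ₂ x r))⁻¹ *
            (J r * wLuxNormE Φ volume (ball x r) (hlMaximal n f)) := mul_assoc _ _ _
    _ ≤ (ENNReal.ofReal (φ₂ x r))⁻¹ *
          (cst * ENNReal.ofReal C * ENNReal.ofReal (φ₂ x r) * N) := mul_le_mul_right hmain _
    _ = (cst * ENNReal.ofReal C) * N *
          ((ENNReal.ofReal (φ₂ x r))⁻¹ * ENNReal.ofReal (φ₂ x r)) := by ring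
    _ = (cst * ENNReal.ofReal C) * N := by
          rw [ENNReal.inv_mul_cancel hφ₂0 hφ₂t, mul_one]
    _ ≤ ENNReal.ofReal ((cst * ENNReal.ofReal C).toReal + 1) * N :=
          mul_le_mul_left hC'big _

end
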